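/- Let A be a linear automorphism of a finite-dimensional real inner product space E, and let V ⊆ E be a subspace. Suppose W is a subspace of E such that A(W) is orthogonal to A(V) and |det(A^{-1}|_{A(W)})| ≤ 1 (i.e. A expands volume on W). Then V ∩ W = {0} and |det(A|_{V + W})| ≥ |det(A|_V)|. -/

import Mathlib

section AuxMatrix

open Matrix in
lemma psdDetNonneg {n : Type*} [Fintype n] [DecidableEq n] {M : Matrix n n ℝ}
    (hM : M.PosSemidef) : 0 ≤ M.det := by
  rw [hM.1.det_eq_prod_eigenvalues]
  exact Finset.prod_nonneg fun i _ => by simpa using hM.eigenvalues_nonneg i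

open Matrix in
lemma detOneAddPsd {n : Type*} [Fintype n] [DecidableEq n] {Q : Matrix n n ℝ}
    (hQ : Q.PosSemidef) : 1 ≤ (1 + Q).det := by
  set U : Matrix n n ℝ := (hQ.1.eigenvectorUnitary : Matrix n n ℝ)
  have hU : U * star U = 1 := (Matrix.mem_unitaryGroup_iff).mp hQ.1.eigenvectorUnitary.2
  have h1 : (1 : Matrix n n ℝ) + Q
      = U * diagonal (fun i => 1 + hQ.1.eigenvalues i) * star U := by
    have := hQ.1.spectral_theorem
    calc (1 : Matrix n n ℝ) + Q
        = U * 1 * star U + U * diagonal (RCLike.ofReal ∘ hQ.1.eigenvalues) * star U := by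
          rw [mul_one, hU]
          rw [Unitary.conjStarAlgAut_apply] at this
          exact congrArg _ this
      _ = U * diagonal (fun i => 1 + hQ.1.eigenvalues i) * star U := by
          rw [← add_mul, ← mul_add, ← diagonal_one, diagonal_add]
          norm_num [Function.comp]
  have hUU : det U * det (star U) = 1 := by rw [← det_mul, hU, det_one]
  rw [h1, det_mul, det_mul, mul_right_comm, hUU, one_mul, det_diagonal]
  calc (1:ℝ) = ∏ _i : n, 1 := by simp
    _ ≤ ∏ i, (1 + hQ.1.eigenvalues i) := by
        refine Finset.prod_le_prod (fun i _ => by norm_num) fun i _ => ?_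
        have := hQ.eigenvalues_nonneg i
        linarith



open Matrix in
lemma psdDetLeDetAdd {n : Type*} [Fintype n] [DecidableEq n] {S P : Matrix n n ℝ}
    (hS : S.PosSemidef) (hP : P.PosSemidef) : S.det ≤ (S + P).det := by
  by_cases h : S.det = 0
  · rw [h]; exact psdDetNonneg (hS.add hP)
  · set R := (by open scoped MatrixOrder in exact CFC.sqrt S : Matrix n n ℝ) with hRdef
    have hR : R.PosSemidef := by
      open scoped MatrixOrder in exact Matrix.nonneg_iff_posSemidef.mp (CFC.sqrt_nonneg S)
    have hRR : R * R = S := by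
      open scoped MatrixOrder in exact CFC.sqrt_mul_sqrt_self S (Matrix.nonneg_iff_posSemidef.mpr hS)
    have hdR : R.det ≠ 0 := fun h0 => h (by rw [← hRR, det_mul, h0, zero_mul])
    have hRRi : R * R⁻¹ = 1 := mul_nonsing_inv R (isUnit_iff_ne_zero.mpr hdR)
    have hRiR : R⁻¹ * R = 1 := nonsing_inv_mul R (isUnit_iff_ne_zero.mpr hdR)
    have hRih : R⁻¹ᴴ = R⁻¹ := by rw [conjTranspose_nonsing_inv, hR.1.eq]
    have hQ : (R⁻¹ * P * R⁻¹).PosSemidef := by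
      have := hP.conjTranspose_mul_mul_same R⁻¹
      rwa [hRih] at this
    have key : S + P = R * (1 + R⁻¹ * P * R⁻¹) * R := by
      rw [mul_add, add_mul, mul_one, hRR]
      congr 1
      symm
      calc R * (R⁻¹ * P * R⁻¹) * R = (R * R⁻¹) * P * (R⁻¹ * R) := by
            simp only [Matrix.mul_assoc]
        _ = P := by rw [hRRi, hRiR, one_mul, mul_one]
    have hSd : 0 < S.det := lt_of_le_of_ne (psdDetNonneg hS) (Ne.symm h)
    have hdet2 : R.det * R.det = S.det := by rw [← det_mul, hRR]
    calc S.det = S.det * 1 := (mul_one _).symm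
      _ ≤ S.det * (1 + R⁻¹ * P * R⁻¹).det := by
          exact mul_le_mul_of_nonneg_left (detOneAddPsd hQ) hSd.le
      _ = (S + P).det := by rw [key, det_mul, det_mul, mul_right_comm, hdet2, mul_comm]



open Matrix in
lemma fischer {m n : Type*} [Fintype m] [DecidableEq m] [Fintype n] [DecidableEq n]
    {A : Matrix m m ℝ} {B : Matrix m n ℝ} {D : Matrix n n ℝ}
    (h : (fromBlocks A B Bᴴ D).PosSemidef) :
    (fromBlocks A B Bᴴ D).det ≤ A.det * D.det := by
  have hA : A.PosSemidef := by
    have := h.submatrix (Sum.inl : m → m ⊕ n)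
    have e : (fromBlocks A B Bᴴ D).submatrix (Sum.inl : m → m ⊕ n) Sum.inl = A := by
      ext i j; simp [fromBlocks]
    rwa [e] at this
  have hD : D.PosSemidef := by
    have := h.submatrix (Sum.inr : n → m ⊕ n)
    have e : (fromBlocks A B Bᴴ D).submatrix (Sum.inr : n → m ⊕ n) Sum.inr = D := by
      ext i j; simp [fromBlocks]
    rwa [e] at this
  by_cases hdA : A.det = 0
  · obtain ⟨v, hv, hAv⟩ := Matrix.exists_mulVec_eq_zero_iff.mpr hdA
    have hbig : (fromBlocks A B Bᴴ D) *ᵥ (Sum.elim v 0) = 0 := by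
      apply (h.dotProduct_mulVec_zero_iff _).mp
      rw [fromBlocks_mulVec]
      simp [hAv]
    have hdet0 : (fromBlocks A B Bᴴ D).det = 0 :=
      Matrix.exists_mulVec_eq_zero_iff.mp
        ⟨Sum.elim v 0, by
          intro h0
          apply hv
          ext i
          exact congrFun h0 (Sum.inl i), hbig⟩
    rw [hdet0, hdA, zero_mul]
  · have hApd : A.PosDef := by
      exact hA.posDef_iff_det_ne_zero.mpr hdA
    haveI : Invertible A := A.invertibleOfIsUnitDet (isUnit_iff_ne_zero.mpr hdA)
    rw [Matrix.det_fromBlocks₁₁, Matrix.invOf_eq_nonsing_inv]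
    have hschur : (D - Bᴴ * A⁻¹ * B).PosSemidef := (Matrix.PosDef.fromBlocks₁₁ B D hApd).mp h
    have hP : (Bᴴ * A⁻¹ * B).PosSemidef := hApd.inv.posSemidef.conjTranspose_mul_mul_same B
    have hle : (D - Bᴴ * A⁻¹ * B).det ≤ D.det := by
      have := psdDetLeDetAdd hschur hP
      rwa [sub_add_cancel] at this
    exact mul_le_mul_of_nonneg_left hle (psdDetNonneg hA)

end AuxMatrix

section AuxOp
open LinearMap Matrix




variable {E F : Type*} [NormedAddCommGroup E] [InnerProductSpace ℝ E] [FiniteDimensional ℝ E]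
  [NormedAddCommGroup F] [InnerProductSpace ℝ F] [FiniteDimensional ℝ F]

lemma gram_eq_matrix {ι κ : Type*} [Fintype ι] [DecidableEq ι] [Fintype κ] [DecidableEq κ]
    (bX : OrthonormalBasis ι ℝ E) (bE : OrthonormalBasis κ ℝ F) (B : E →ₗ[ℝ] F) :
    LinearMap.det (adjoint B ∘ₗ B)
      = ((toMatrix bX.toBasis bE.toBasis B)ᴴ * (toMatrix bX.toBasis bE.toBasis B)).det := by
  rw [← LinearMap.det_toMatrix bX.toBasis, LinearMap.toMatrix_comp _ bE.toBasis,
    LinearMap.toMatrix_adjoint]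

lemma gramDet_nonneg (B : E →ₗ[ℝ] F) : 0 ≤ LinearMap.det (adjoint B ∘ₗ B) := by
  rw [gram_eq_matrix (stdOrthonormalBasis ℝ E) (stdOrthonormalBasis ℝ F) B]
  exact psdDetNonneg (posSemidef_conjTranspose_mul_self _)




lemma adjoint_subtype_comp (V : Submodule ℝ E) :
    adjoint V.subtype ∘ₗ V.subtype = LinearMap.id := by
  refine LinearMap.ext fun v => ext_inner_right ℝ fun w => ?_
  rw [LinearMap.comp_apply, LinearMap.adjoint_inner_left]
  rfl

/-- Gram determinant of `A|_V` times Gram determinant of `A⁻¹|_{A(V)}` is `1`. -/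
lemma gramDet_mul_symm (A : E ≃ₗ[ℝ] E) (V : Submodule ℝ E) :
    LinearMap.det (adjoint ((A : E →ₗ[ℝ] E) ∘ₗ V.subtype) ∘ₗ ((A : E →ₗ[ℝ] E) ∘ₗ V.subtype)) *
    LinearMap.det (adjoint ((A.symm : E →ₗ[ℝ] E) ∘ₗ (V.map (A : E →ₗ[ℝ] E)).subtype) ∘ₗ
      ((A.symm : E →ₗ[ℝ] E) ∘ₗ (V.map (A : E →ₗ[ℝ] E)).subtype)) = 1 := by
  set e : V ≃ₗ[ℝ] V.map (A : E →ₗ[ℝ] E) := A.submoduleMap V with he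
  set fl : (V : Submodule ℝ E) →ₗ[ℝ] V.map (A : E →ₗ[ℝ] E) := e.toLinearMap with hfl
  set gl : (V.map (A : E →ₗ[ℝ] E) : Submodule ℝ E) →ₗ[ℝ] V := e.symm.toLinearMap with hgl
  have F1 : (A : E →ₗ[ℝ] E) ∘ₗ V.subtype = (V.map (A : E →ₗ[ℝ] E)).subtype ∘ₗ fl := by
    ext x; rfl
  have F2 : (A.symm : E →ₗ[ℝ] E) ∘ₗ (V.map (A : E →ₗ[ℝ] E)).subtype = V.subtype ∘ₗ gl := by
    ext y
    apply A.injective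
    show A (A.symm (y : E)) = A (((e.symm y : ↥V) : E))
    have h3 : A (((e.symm y : ↥V) : E)) = ((e (e.symm y) : ↥(V.map (A : E →ₗ[ℝ] E))) : E) := rfl
    rw [A.apply_symm_apply, h3, e.apply_symm_apply]
  have G1 : adjoint ((A : E →ₗ[ℝ] E) ∘ₗ V.subtype) ∘ₗ ((A : E →ₗ[ℝ] E) ∘ₗ V.subtype)
      = adjoint fl ∘ₗ fl := by
    rw [F1, LinearMap.adjoint_comp]
    calc (adjoint fl ∘ₗ adjoint (V.map (A : E →ₗ[ℝ] E)).subtype) ∘ₗ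
          ((V.map (A : E →ₗ[ℝ] E)).subtype ∘ₗ fl)
        = adjoint fl ∘ₗ ((adjoint (V.map (A : E →ₗ[ℝ] E)).subtype ∘ₗ
            (V.map (A : E →ₗ[ℝ] E)).subtype) ∘ₗ fl) := by
          simp only [LinearMap.comp_assoc]
      _ = adjoint fl ∘ₗ fl := by rw [adjoint_subtype_comp, LinearMap.id_comp]
  have G2 : adjoint ((A.symm : E →ₗ[ℝ] E) ∘ₗ (V.map (A : E →ₗ[ℝ] E)).subtype) ∘ₗ
        ((A.symm : E →ₗ[ℝ] E) ∘ₗ (V.map (A : E →ₗ[ℝ] E)).subtype)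
      = adjoint gl ∘ₗ gl := by
    rw [F2, LinearMap.adjoint_comp]
    calc (adjoint gl ∘ₗ adjoint V.subtype) ∘ₗ (V.subtype ∘ₗ gl)
        = adjoint gl ∘ₗ ((adjoint V.subtype ∘ₗ V.subtype) ∘ₗ gl) := by
          simp only [LinearMap.comp_assoc]
      _ = adjoint gl ∘ₗ gl := by rw [adjoint_subtype_comp, LinearMap.id_comp]
  rw [G1, G2]
  have hfg : fl ∘ₗ gl = LinearMap.id := by ext y; exact congrArg _ (e.apply_symm_apply y)
  have hgf : gl ∘ₗ fl = LinearMap.id := by ext x; exact congrArg _ (e.symm_apply_apply x)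
  have hconj : LinearMap.det (adjoint fl ∘ₗ fl)
      = LinearMap.det (fl ∘ₗ (adjoint fl ∘ₗ fl) ∘ₗ gl) := by
    have := LinearMap.det_conj (adjoint fl ∘ₗ fl) e
    rw [← this]
  rw [hconj, ← LinearMap.det_comp]
  have : (fl ∘ₗ (adjoint fl ∘ₗ fl) ∘ₗ gl) ∘ₗ (adjoint gl ∘ₗ gl) = LinearMap.id := by
    calc (fl ∘ₗ (adjoint fl ∘ₗ fl) ∘ₗ gl) ∘ₗ (adjoint gl ∘ₗ gl)
        = fl ∘ₗ adjoint fl ∘ₗ ((fl ∘ₗ gl) ∘ₗ adjoint gl) ∘ₗ gl := by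
          simp only [LinearMap.comp_assoc]
      _ = fl ∘ₗ (adjoint fl ∘ₗ adjoint gl) ∘ₗ gl := by
          rw [hfg, LinearMap.id_comp]
          simp only [LinearMap.comp_assoc]
      _ = fl ∘ₗ adjoint (gl ∘ₗ fl) ∘ₗ gl := by rw [LinearMap.adjoint_comp]
      _ = fl ∘ₗ gl := by
          have hid : adjoint (LinearMap.id : V →ₗ[ℝ] V) = LinearMap.id := by
            refine LinearMap.ext fun v => ext_inner_right ℝ fun w => ?_
            rw [LinearMap.adjoint_inner_left]
            rfl
          rw [hgf, hid, LinearMap.id_comp]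
      _ = LinearMap.id := hfg
  rw [this, LinearMap.det_id]








lemma gramDet_sup_le (X Y : Submodule ℝ E)
    (h : ∀ x ∈ X, ∀ y ∈ Y, (inner ℝ x y : ℝ) = 0) (B : E →ₗ[ℝ] E) :
    LinearMap.det (adjoint (B ∘ₗ (X ⊔ Y).subtype) ∘ₗ (B ∘ₗ (X ⊔ Y).subtype))
      ≤ LinearMap.det (adjoint (B ∘ₗ X.subtype) ∘ₗ (B ∘ₗ X.subtype)) *
        LinearMap.det (adjoint (B ∘ₗ Y.subtype) ∘ₗ (B ∘ₗ Y.subtype)) := by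
  classical
  set bX := stdOrthonormalBasis ℝ X
  set bY := stdOrthonormalBasis ℝ Y
  set bE := stdOrthonormalBasis ℝ E
  set v : (Fin (Module.finrank ℝ X) ⊕ Fin (Module.finrank ℝ Y)) → ↥(X ⊔ Y) :=
    Sum.elim (fun i => Submodule.inclusion (le_sup_left : X ≤ X ⊔ Y) (bX i))
      (fun j => Submodule.inclusion (le_sup_right : Y ≤ X ⊔ Y) (bY j)) with hv
  have hv_on : Orthonormal ℝ v := by
    rw [orthonormal_iff_ite]
    rintro (i|i) (j|j)
    · simp only [hv, Sum.elim_inl, Submodule.coe_inner, Submodule.coe_inclusion]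
      rw [← Submodule.coe_inner, orthonormal_iff_ite.mp bX.orthonormal i j]
      simp
    · simp only [hv, Sum.elim_inl, Sum.elim_inr, Submodule.coe_inner, Submodule.coe_inclusion]
      rw [h _ (bX i).2 _ (bY j).2]
      simp
    · simp only [hv, Sum.elim_inl, Sum.elim_inr, Submodule.coe_inner, Submodule.coe_inclusion]
      rw [real_inner_comm, h _ (bX j).2 _ (bY i).2]
      simp
    · simp only [hv, Sum.elim_inr, Submodule.coe_inner, Submodule.coe_inclusion]
      rw [← Submodule.coe_inner, orthonormal_iff_ite.mp bY.orthonormal i j]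
      simp
  have hspan : ⊤ ≤ Submodule.span ℝ (Set.range v) := by
    rintro ⟨z, hz⟩ -
    obtain ⟨x, hx, y, hy, rfl⟩ := Submodule.mem_sup.mp hz
    have hxz : (⟨x + y, hz⟩ : ↥(X ⊔ Y)) = Submodule.inclusion (le_sup_left : X ≤ X ⊔ Y) ⟨x, hx⟩
        + Submodule.inclusion (le_sup_right : Y ≤ X ⊔ Y) ⟨y, hy⟩ := rfl
    rw [hxz]
    refine add_mem ?_ ?_
    · have h1 : (⟨x, hx⟩ : X) ∈ Submodule.span ℝ (Set.range ⇑bX) := by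
        have : Set.range ⇑bX = Set.range ⇑bX.toBasis := by rw [OrthonormalBasis.coe_toBasis]
        rw [this, Module.Basis.span_eq]
        trivial
      have h2 := Submodule.mem_map_of_mem
        (f := (Submodule.inclusion (le_sup_left : X ≤ X ⊔ Y) : X →ₗ[ℝ] ↥(X ⊔ Y))) h1
      rw [Submodule.map_span] at h2
      refine Submodule.span_mono ?_ h2
      rintro _ ⟨_, ⟨i, rfl⟩, rfl⟩
      exact ⟨Sum.inl i, rfl⟩
    · have h1 : (⟨y, hy⟩ : Y) ∈ Submodule.span ℝ (Set.range ⇑bY) := by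
        have : Set.range ⇑bY = Set.range ⇑bY.toBasis := by rw [OrthonormalBasis.coe_toBasis]
        rw [this, Module.Basis.span_eq]
        trivial
      have h2 := Submodule.mem_map_of_mem
        (f := (Submodule.inclusion (le_sup_right : Y ≤ X ⊔ Y) : Y →ₗ[ℝ] ↥(X ⊔ Y))) h1
      rw [Submodule.map_span] at h2
      refine Submodule.span_mono ?_ h2
      rintro _ ⟨_, ⟨i, rfl⟩, rfl⟩
      exact ⟨Sum.inr i, rfl⟩
  set bb : Module.Basis (Fin (Module.finrank ℝ X) ⊕ Fin (Module.finrank ℝ Y)) ℝ ↥(X ⊔ Y) :=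
    Module.Basis.mk hv_on.linearIndependent hspan with hbb
  have hbb_coe : ⇑bb = v := Module.Basis.coe_mk _ _
  set b : OrthonormalBasis (Fin (Module.finrank ℝ X) ⊕ Fin (Module.finrank ℝ Y)) ℝ ↥(X ⊔ Y) :=
    bb.toOrthonormalBasis (hbb_coe ▸ hv_on) with hb
  have hb_toBasis : b.toBasis = bb := Module.Basis.toBasis_toOrthonormalBasis _ _
  set N₁ := toMatrix bX.toBasis bE.toBasis (B ∘ₗ X.subtype) with hN1
  set N₂ := toMatrix bY.toBasis bE.toBasis (B ∘ₗ Y.subtype) with hN2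
  have hN : toMatrix b.toBasis bE.toBasis (B ∘ₗ (X ⊔ Y).subtype) = fromCols N₁ N₂ := by
    ext k (i|j)
    · rw [LinearMap.toMatrix_apply, hb_toBasis, hbb_coe]
      simp only [fromCols, of_apply, Sum.elim_inl, hN1, LinearMap.toMatrix_apply]
      rfl
    · rw [LinearMap.toMatrix_apply, hb_toBasis, hbb_coe]
      simp only [fromCols, of_apply, Sum.elim_inr, hN2, LinearMap.toMatrix_apply]
      rfl
  have hblocks : (fromCols N₁ N₂)ᴴ * fromCols N₁ N₂
      = fromBlocks (N₁ᴴ * N₁) (N₁ᴴ * N₂) ((N₁ᴴ * N₂)ᴴ) (N₂ᴴ * N₂) := by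
    rw [conjTranspose_fromCols_eq_fromRows_conjTranspose, fromRows_mul_fromCols]
    rw [conjTranspose_mul, conjTranspose_conjTranspose]
  have hpsd : (fromBlocks (N₁ᴴ * N₁) (N₁ᴴ * N₂) ((N₁ᴴ * N₂)ᴴ) (N₂ᴴ * N₂)).PosSemidef := by
    rw [← hblocks]
    exact posSemidef_conjTranspose_mul_self _
  rw [gram_eq_matrix b bE, gram_eq_matrix bX bE, gram_eq_matrix bY bE, hN, hblocks]
  exact fischer hpsd

end AuxOp


lemma auxSqrtLe {b : ℝ} (hb0 : 0 ≤ b) (h : Real.sqrt b ≤ 1) : b ≤ 1 := by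
  have h2 : b = Real.sqrt b * Real.sqrt b := (Real.mul_self_sqrt hb0).symm
  nlinarith [Real.sqrt_nonneg b]

lemma auxArith {a b c d s : ℝ} (hca : c * a = 1) (hds : d * s = 1) (ha0 : 0 ≤ a)
    (hb0 : 0 ≤ b) (hs0 : 0 ≤ s) (hb1 : b ≤ 1) (hfis : s ≤ a * b) : c ≤ d := by
  have hapos : 0 < a := by
    rcases lt_or_eq_of_le ha0 with h | h
    · exact h
    · exfalso; rw [← h] at hca; simp at hca
  have hspos : 0 < s := by
    rcases lt_or_eq_of_le hs0 with h | h
    · exact h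
    · exfalso; rw [← h] at hds; simp at hds
  have hsa : s ≤ a := le_trans hfis (by nlinarith)
  have hcinv : c = 1 / a := by rw [eq_div_iff hapos.ne']; exact hca
  have hdinv : d = 1 / s := by rw [eq_div_iff hspos.ne']; exact hds
  rw [hcinv, hdinv]
  exact one_div_le_one_div_of_le hspos hsa


/-- The volume-scaling factor (absolute Jacobian determinant) of a linear map `A`
restricted to a subspace `V`, defined via the Gram determinant `√(det (A|_V)^* (A|_V))`.
For `V = ⊥` it equals `1`. -/
noncomputable def sdet {E F : Type*} [NormedAddCommGroup E] [InnerProductSpace ℝ E]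
    [FiniteDimensional ℝ E] [NormedAddCommGroup F] [InnerProductSpace ℝ F]
    [FiniteDimensional ℝ F] (A : E →ₗ[ℝ] F) (V : Submodule ℝ E) : ℝ :=
  Real.sqrt (LinearMap.det ((LinearMap.adjoint (A ∘ₗ V.subtype)) ∘ₗ (A ∘ₗ V.subtype)))

/-- Let `A` be a linear automorphism of a finite-dimensional real inner product
space `E` and `V, W` subspaces such that `A(W)` is orthogonal to `A(V)` and
`|det(A⁻¹|_{A(W)})| ≤ 1` (`A` expands volume on `W`). Then `V ∩ W = {0}` and
`|det(A|_{V + W})| ≥ |det(A|_V)|`. -/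
theorem stmt3 {E : Type*} [NormedAddCommGroup E] [InnerProductSpace ℝ E]
    [FiniteDimensional ℝ E] (A : E ≃ₗ[ℝ] E) (V W : Submodule ℝ E)
    (horth : ∀ v ∈ V.map (A : E →ₗ[ℝ] E), ∀ w ∈ W.map (A : E →ₗ[ℝ] E), (inner ℝ v w : ℝ) = 0)
    (hexp : sdet (A.symm : E →ₗ[ℝ] E) (W.map (A : E →ₗ[ℝ] E)) ≤ 1) :
    V ⊓ W = ⊥ ∧ sdet (A : E →ₗ[ℝ] E) V ≤ sdet (A : E →ₗ[ℝ] E) (V ⊔ W) := by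
  constructor
  · rw [eq_bot_iff]
    rintro x ⟨hxV, hxW⟩
    have h0 : (inner ℝ (A x) (A x) : ℝ) = 0 :=
      horth _ (Submodule.mem_map_of_mem hxV) _ (Submodule.mem_map_of_mem hxW)
    have : A x = 0 := inner_self_eq_zero.mp h0
    have : x = 0 := by
      apply A.injective
      simpa using this
    simp [this]
  · -- notation
    set c := LinearMap.det (LinearMap.adjoint ((A : E →ₗ[ℝ] E) ∘ₗ V.subtype) ∘ₗ
      ((A : E →ₗ[ℝ] E) ∘ₗ V.subtype)) with hc
    set d := LinearMap.det (LinearMap.adjoint ((A : E →ₗ[ℝ] E) ∘ₗ (V ⊔ W).subtype) ∘ₗ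
      ((A : E →ₗ[ℝ] E) ∘ₗ (V ⊔ W).subtype)) with hd
    set a := LinearMap.det (LinearMap.adjoint ((A.symm : E →ₗ[ℝ] E) ∘ₗ
      (V.map (A : E →ₗ[ℝ] E)).subtype) ∘ₗ ((A.symm : E →ₗ[ℝ] E) ∘ₗ
      (V.map (A : E →ₗ[ℝ] E)).subtype)) with ha
    set bq := LinearMap.det (LinearMap.adjoint ((A.symm : E →ₗ[ℝ] E) ∘ₗ
      (W.map (A : E →ₗ[ℝ] E)).subtype) ∘ₗ ((A.symm : E →ₗ[ℝ] E) ∘ₗ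
      (W.map (A : E →ₗ[ℝ] E)).subtype)) with hbq
    set s := LinearMap.det (LinearMap.adjoint ((A.symm : E →ₗ[ℝ] E) ∘ₗ
      ((V ⊔ W).map (A : E →ₗ[ℝ] E)).subtype) ∘ₗ ((A.symm : E →ₗ[ℝ] E) ∘ₗ
      ((V ⊔ W).map (A : E →ₗ[ℝ] E)).subtype)) with hs
    have hca : c * a = 1 := gramDet_mul_symm A V
    have hds : d * s = 1 := gramDet_mul_symm A (V ⊔ W)
    have ha0 : 0 ≤ a := gramDet_nonneg _
    have hb0 : 0 ≤ bq := gramDet_nonneg _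
    have hc0 : 0 ≤ c := gramDet_nonneg _
    have hd0 : 0 ≤ d := gramDet_nonneg _
    have hs0 : 0 ≤ s := gramDet_nonneg _
    -- hexp gives bq ≤ 1
    have hbq1 : bq ≤ 1 := auxSqrtLe hb0 hexp
    have hsup : (V ⊔ W).map (A : E →ₗ[ℝ] E)
        = V.map (A : E →ₗ[ℝ] E) ⊔ W.map (A : E →ₗ[ℝ] E) := Submodule.map_sup _ _ _
    have hscong : s = LinearMap.det (LinearMap.adjoint ((A.symm : E →ₗ[ℝ] E) ∘ₗ
        (V.map (A : E →ₗ[ℝ] E) ⊔ W.map (A : E →ₗ[ℝ] E)).subtype) ∘ₗ ((A.symm : E →ₗ[ℝ] E) ∘ₗ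
        (V.map (A : E →ₗ[ℝ] E) ⊔ W.map (A : E →ₗ[ℝ] E)).subtype)) :=
      congrArg (fun U : Submodule ℝ E => LinearMap.det
        (LinearMap.adjoint ((A.symm : E →ₗ[ℝ] E) ∘ₗ U.subtype) ∘ₗ
          ((A.symm : E →ₗ[ℝ] E) ∘ₗ U.subtype))) hsup
    have hfis : s ≤ a * bq := by
      rw [hscong]
      exact gramDet_sup_le _ _ horth _
    exact Real.sqrt_le_sqrt (auxArith hca hds ha0 hb0 hs0 hbq1 hfis)
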